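/- Let C > 0 with C³ < 4(C²+C+1). Then the sequence S₀ = 0, S₁ = 1, S_{k+1} = ((C²+2C+2)S_k − (C²+C+1)S_{k−1})/(2C+1) attains a negative value: there exists k ≥ 1 with S_k < 0. -/

import Mathlib

/-- For `0 < C` with `C³ < 4(C²+C+1)`, the recurrence solution `S` attains a
negative value. -/
theorem stmt_14 (C : ℝ) (hC : 0 < C) (h : C ^ 3 < 4 * (C ^ 2 + C + 1))
    (S : ℕ → ℝ) (hS0 : S 0 = 0) (hS1 : S 1 = 1)
    (hrec : ∀ k ≥ 1, S (k + 1)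
      = ((C ^ 2 + 2 * C + 2) * S k - (C ^ 2 + C + 1) * S (k - 1)) / (2 * C + 1)) :
    ∃ k : ℕ, 1 ≤ k ∧ S k < 0 := by
  by_contra hcon
  push_neg at hcon
  set a : ℝ := C ^ 2 + 2 * C + 2 with ha
  set b : ℝ := C ^ 2 + C + 1 with hb
  set d : ℝ := 2 * C + 1 with hd
  have hdpos : (0:ℝ) < d := by positivity
  have hbpos : (0:ℝ) < b := by positivity
  have hapos : (0:ℝ) < a := by positivity
  have hM : (0:ℝ) < 4 * d * b - a ^ 2 := by nlinarith
  set M : ℝ := 4 * d * b - a ^ 2 with hMdef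
  have hrec' : ∀ k : ℕ, S (k + 2) * d = a * S (k + 1) - b * S k := by
    intro k
    have h1 := hrec (k + 1) (by omega)
    have h2 : k + 1 - 1 = k := by omega
    rw [h2] at h1
    rw [show k + 2 = k + 1 + 1 from rfl, h1]
    field_simp
  -- strict positivity
  have hpos : ∀ k : ℕ, 0 < S (k + 1) := by
    intro k
    induction k with
    | zero => simpa [hS1] using one_pos
    | succ n ih =>
      rcases lt_or_eq_of_le (hcon (n + 2) (by omega)) with h' | h'
      · exact h'
      · exfalso
        have h3 := hcon (n + 3) (by omega)
        have key := hrec' (n + 1)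
        rw [show n + 1 + 2 = n + 3 from rfl, show n + 1 + 1 = n + 2 from rfl,
          ← h'] at key
        nlinarith
  set t : ℕ → ℝ := fun n => S (n + 2) / S (n + 1) with htdef
  have htpos : ∀ n, 0 < t n := fun n => div_pos (hpos (n + 1)) (hpos n)
  have ht0 : 0 < t 0 := htpos 0
  set δ : ℝ := M / (4 * d ^ 2 * t 0) with hδdef
  have hδpos : 0 < δ := by
    apply div_pos hM; positivity
  have hδeq : δ * (4 * d ^ 2 * t 0) = M := by
    rw [hδdef]; field_simp
  have hrat : ∀ n, t (n + 1) * (d * t n) = a * t n - b := by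
    intro n
    have key := hrec' (n + 1)
    have p1 := hpos n
    have p2 := hpos (n + 1)
    show S (n + 3) / S (n + 2) * (d * (S (n + 2) / S (n + 1))) =
      a * (S (n + 2) / S (n + 1)) - b
    rw [show n + 1 + 2 = n + 3 from rfl, show n + 1 + 1 = n + 2 from rfl] at key
    field_simp
    linear_combination key
  have main : ∀ n : ℕ, t n ≤ t 0 - n * δ := by
    intro n
    induction n with
    | zero => simp
    | succ n ih =>
      have h1 := htpos n
      have hle : t n ≤ t 0 := le_trans ih (by nlinarith [Nat.cast_nonneg (α := ℝ) n])
      have hk := hrat n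
      have hstep : t (n + 1) ≤ t n - δ := by
        have hd2 : 0 < d * t n := by positivity
        have key : t (n + 1) * (d * t n) ≤ (t n - δ) * (d * t n) := by
          rw [hk]
          nlinarith [sq_nonneg (2 * d * t n - a), hδeq,
            mul_nonneg (mul_nonneg hδpos.le (sub_nonneg.2 hle)) (sq_nonneg d)]
        exact le_of_mul_le_mul_right key hd2
      have : (n : ℝ) + 1 = ((n + 1 : ℕ) : ℝ) := by push_cast; ring
      calc t (n + 1) ≤ t n - δ := hstep
        _ ≤ t 0 - n * δ - δ := by linarith
        _ = t 0 - (n + 1 : ℕ) * δ := by push_cast; ring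
  obtain ⟨N, hN⟩ := exists_nat_gt (t 0 / δ)
  have hNδ : t 0 < N * δ := by
    rw [div_lt_iff₀ hδpos] at hN; linarith
  have := main N
  have := htpos N
  linarith
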